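/- Let G be a group and a, b ∈ G with b a b^{-1} = a^{-1} (as holds in the dihedral and generalised quaternion 2-groups). Then for every ℓ ≥ 2, all integers α_1,…,α_ℓ and all natural numbers β_1,…,β_ℓ, the left-normed commutator satisfies [a^{α_1} b^{β_1}, …, a^{α_ℓ} b^{β_ℓ}] = a^{2^{ℓ−1}·\bar{β}_ℓ ⋯ \bar{β}_3·(α_1 \bar{β}_2 − α_2 \bar{β}_1)}, where \bar{β}_i ∈ {0,1} satisfies \bar{β}_i ≡ β_i (mod 2) for each i. -/

import Mathlib

open scoped commutatorElement

/-- The left-normed commutator `[x₁, x₂, …, x_ℓ] = [[x₁, …, x_{ℓ-1}], x_ℓ]`,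
with the conventions that the empty list gives `1` and a singleton gives its
entry. -/
def leftNormedCommutator {G : Type*} [Group G] : List G → G
  | [] => 1
  | x :: xs => xs.foldl (fun acc y => ⁅acc, y⁆) x

section
variable {G : Type*} [Group G] (a b : G) (h : b * a * b⁻¹ = a⁻¹)
include h

lemma aux1 (m : ℤ) : b * a ^ m * b⁻¹ = a ^ (-m) := by
  rw [← conj_zpow, h, ← zpow_neg_one, ← zpow_mul, neg_one_mul]

lemma move0 (n : ℕ) (m : ℤ) : b ^ n * a ^ m = a ^ ((-1 : ℤ) ^ n * m) * b ^ n := by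
  induction n generalizing m with
  | zero => simp
  | succ k ih =>
    have hb : b * a ^ m = a ^ (-m) * b := by
      have := aux1 a b h m; rw [← this]; group
    calc b ^ (k+1) * a ^ m = b ^ k * (b * a ^ m) := by rw [pow_succ]; group
      _ = b ^ k * a ^ (-m) * b := by rw [hb]; group
      _ = a ^ ((-1:ℤ) ^ k * (-m)) * b ^ k * b := by rw [ih]
      _ = a ^ ((-1:ℤ) ^ (k+1) * m) * b ^ (k+1) := by
          rw [pow_succ b k]
          have : (-1:ℤ) ^ k * (-m) = (-1:ℤ) ^ (k+1) * m := by ring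
          rw [this, mul_assoc]

omit [Group G] h in
lemma sq1 (n : ℕ) : ((-1 : ℤ) ^ n) * ((-1 : ℤ) ^ n) = 1 := by
  rw [← pow_add, ← two_mul, pow_mul]; norm_num

lemma move0' (n : ℕ) (m : ℤ) : (b ^ n)⁻¹ * a ^ m = a ^ ((-1 : ℤ) ^ n * m) * (b ^ n)⁻¹ := by
  have key : b ^ n * a ^ ((-1:ℤ) ^ n * m) = a ^ m * b ^ n := by
    rw [move0 a b h, ← mul_assoc, sq1 n, one_mul]
  calc (b ^ n)⁻¹ * a ^ m = (b ^ n)⁻¹ * ((a ^ m * b ^ n) * (b ^ n)⁻¹) := by group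
    _ = (b ^ n)⁻¹ * ((b ^ n * a ^ ((-1:ℤ) ^ n * m)) * (b ^ n)⁻¹) := by rw [key]
    _ = a ^ ((-1:ℤ) ^ n * m) * (b ^ n)⁻¹ := by group

lemma move (n : ℕ) (m : ℤ) (g : G) :
    b ^ n * (a ^ m * g) = a ^ ((-1 : ℤ) ^ n * m) * (b ^ n * g) := by
  rw [← mul_assoc, move0 a b h, mul_assoc]

lemma move' (n : ℕ) (m : ℤ) (g : G) :
    (b ^ n)⁻¹ * (a ^ m * g) = a ^ ((-1 : ℤ) ^ n * m) * ((b ^ n)⁻¹ * g) := by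
  rw [← mul_assoc, move0' a b h, mul_assoc]

lemma commKey (α γ : ℤ) (n d : ℕ) :
    ⁅a ^ α * b ^ n, a ^ γ * b ^ d⁆
      = a ^ (α + (-1:ℤ) ^ n * γ - (-1:ℤ) ^ d * α - γ) := by
  have expand : ⁅a ^ α * b ^ n, a ^ γ * b ^ d⁆
      = a ^ α * (b ^ n * (a ^ γ * (b ^ d * ((b ^ n)⁻¹ * (a ^ (-α) * ((b ^ d)⁻¹ * a ^ (-γ))))))) := by
    rw [commutatorElement_def]; group
  rw [expand, move a b h n γ]
  rw [move' a b h n (-α)]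
  rw [move a b h d ((-1:ℤ)^n * -α)]
  rw [move a b h n ((-1:ℤ)^d * ((-1:ℤ)^n * -α))]
  rw [move0' a b h d (-γ)]
  rw [move' a b h n ((-1:ℤ)^d * -γ)]
  rw [move a b h d ((-1:ℤ)^n * ((-1:ℤ)^d * -γ))]
  rw [move a b h n ((-1:ℤ)^d * ((-1:ℤ)^n * ((-1:ℤ)^d * -γ)))]
  have hb1 : b ^ n * (b ^ d * ((b ^ n)⁻¹ * (b ^ d)⁻¹)) = 1 := by
    group
  rw [hb1, mul_one, ← zpow_add, ← zpow_add, ← zpow_add]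
  congr 1
  rcases Nat.even_or_odd n with hn | hn <;> rcases Nat.even_or_odd d with hd | hd <;>
    simp [hn.neg_one_pow, hd.neg_one_pow] <;> ring

lemma commKey2 (α γ : ℤ) (n d : ℕ) :
    ⁅a ^ α * b ^ n, a ^ γ * b ^ d⁆
      = a ^ (2 * (α * ((d % 2 : ℕ) : ℤ) - γ * ((n % 2 : ℕ) : ℤ))) := by
  rw [commKey a b h]
  congr 1
  rcases Nat.even_or_odd n with hn | hn <;> rcases Nat.even_or_odd d with hd | hd <;>
    simp [hn.neg_one_pow, hd.neg_one_pow, Nat.even_iff.mp, Nat.odd_iff.mp, hn, hd] <;> ring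

lemma commKey3 (m γ : ℤ) (d : ℕ) :
    ⁅a ^ m, a ^ γ * b ^ d⁆ = a ^ (2 * (m * ((d % 2 : ℕ) : ℤ))) := by
  have := commKey2 a b h m γ 0 d
  simpa using this

end

lemma LNC_concat {G : Type*} [Group G] (l : List G) (hl : l ≠ []) (y : G) :
    leftNormedCommutator (l ++ [y]) = ⁅leftNormedCommutator l, y⁆ := by
  cases l with
  | nil => simp at hl
  | cons x xs => simp [leftNormedCommutator, List.foldl_append]


/-- If `b a b⁻¹ = a⁻¹` (as in dihedral and generalised
quaternion 2-groups), then for `ℓ ≥ 2`,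
`[a^α₁ b^β₁, …, a^α_ℓ b^β_ℓ] = a^(2^{ℓ−1}·β̄_ℓ⋯β̄₃·(α₁β̄₂ − α₂β̄₁))`,
where `β̄ᵢ ∈ {0,1}` and `β̄ᵢ ≡ βᵢ (mod 2)` (here `β̄ᵢ = βᵢ % 2`, and indices
are shifted to start at `0`). -/
theorem leftNormedCommutator_dihedral_quaternion
    {G : Type*} [Group G] (a b : G) (h : b * a * b⁻¹ = a⁻¹)
    (ℓ : ℕ) (hℓ : 2 ≤ ℓ) (α : ℕ → ℤ) (β : ℕ → ℕ) :
    leftNormedCommutator ((List.range ℓ).map fun i => a ^ α i * b ^ β i)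
      = a ^ ((2 : ℤ) ^ (ℓ - 1) * (∏ i ∈ Finset.Ico 2 ℓ, ((β i % 2 : ℕ) : ℤ)) *
          (α 0 * ((β 1 % 2 : ℕ) : ℤ) - α 1 * ((β 0 % 2 : ℕ) : ℤ))) := by
  induction ℓ, hℓ using Nat.le_induction with
  | base =>
    have : List.range 2 = [0, 1] := by decide
    rw [this]
    simp only [List.map_cons, List.map_nil]
    show ⁅a ^ α 0 * b ^ β 0, a ^ α 1 * b ^ β 1⁆ = _
    rw [commKey2 a b h]
    congr 1
  | succ ℓ hℓ ih =>
    rw [List.range_succ, List.map_append, List.map_cons, List.map_nil,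
      LNC_concat _ (by simp; omega), ih, commKey3 a b h]
    congr 1
    rw [Finset.prod_Ico_succ_top (by omega : 2 ≤ ℓ)]
    have h1 : ℓ + 1 - 1 = ℓ - 1 + 1 := by omega
    rw [h1, pow_succ]
    ring
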